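/- Let X and Y be real normed spaces and let f : X → Y be a surjective map satisfying the phase-isometry condition. Let x, y ∈ X satisfy ‖x−y‖ < ‖x+y‖. If ‖f(x)−f(y)‖ = ‖x+y‖, and ‖u+v‖ ≥ ‖u−v‖ for all u, v ∈ H_{x,y}, and ‖u'+v'‖ ≥ ‖u'−v'‖ for all u', v' ∈ H_{f(x),−f(y)}, then f((1/2)(x+y)) = (1/2)(f(x)−f(y)) or f((1/2)(x+y)) = −(1/2)(f(x)−f(y)). -/

import Mathlib

/-- The phase-isometry condition: `{‖f x + f y‖, ‖f x − f y‖} = {‖x + y‖, ‖x − y‖}` as sets. -/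
def PhaseIsometry {X Y : Type*} [NormedAddCommGroup X] [NormedAddCommGroup Y]
    (f : X → Y) : Prop :=
  ∀ x y : X, ({‖f x + f y‖, ‖f x - f y‖} : Set ℝ) = {‖x + y‖, ‖x - y‖}

/-- `Hset x y = {u : ‖u − x‖ = ‖u − y‖ = (1/2)‖x − y‖}`. -/
def Hset {S : Type*} [NormedAddCommGroup S] (x y : S) : Set S :=
  {u : S | ‖u - x‖ = ‖x - y‖ / 2 ∧ ‖u - y‖ = ‖x - y‖ / 2}

lemma pair_eq_elim {a b c e : ℝ} (h : ({a, b} : Set ℝ) = {c, e}) :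
    (a = c ∨ a = e) ∧ (b = c ∨ b = e) ∧ (c = a ∨ c = b) ∧ (e = a ∨ e = b) := by
  have h1 : a ∈ ({c, e} : Set ℝ) := by rw [← h]; simp
  have h2 : b ∈ ({c, e} : Set ℝ) := by rw [← h]; simp
  have h3 : c ∈ ({a, b} : Set ℝ) := by rw [h]; simp
  have h4 : e ∈ ({a, b} : Set ℝ) := by rw [h]; simp
  simp only [Set.mem_insert_iff, Set.mem_singleton_iff] at h1 h2 h3 h4
  exact ⟨h1, h2, h3, h4⟩

lemma pair_max_min {a b c e : ℝ} (h : ({a, b} : Set ℝ) = {c, e}) (hba : b ≤ a) (hec : e ≤ c) :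
    a = c ∧ b = e := by
  obtain ⟨h1, h2, h3, h4⟩ := pair_eq_elim h
  constructor <;>
    (rcases h1 with h1 | h1 <;> rcases h2 with h2 | h2 <;> rcases h3 with h3 | h3 <;>
      rcases h4 with h4 | h4 <;> linarith)

theorem phase_isometry_midpoint_opposite_sign
    {X Y : Type*} [NormedAddCommGroup X] [NormedSpace ℝ X]
    [NormedAddCommGroup Y] [NormedSpace ℝ Y]
    (f : X → Y) (hsurj : Function.Surjective f) (hf : PhaseIsometry f)
    (x y : X) (hlt : ‖x - y‖ < ‖x + y‖) (heq : ‖f x - f y‖ = ‖x + y‖)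
    (hX : ∀ u ∈ Hset x y, ∀ v ∈ Hset x y, ‖u + v‖ ≥ ‖u - v‖)
    (hY : ∀ u' ∈ Hset (f x) (-f y), ∀ v' ∈ Hset (f x) (-f y), ‖u' + v'‖ ≥ ‖u' - v'‖) :
    f (((1 : ℝ) / 2) • (x + y)) = ((1 : ℝ) / 2) • (f x - f y) ∨
    f (((1 : ℝ) / 2) • (x + y)) = -(((1 : ℝ) / 2) • (f x - f y)) := by
  classical
  -- ‖f x + f y‖ = ‖x - y‖
  have hd : ‖f x + f y‖ = ‖x - y‖ := by
    have h4 := pair_eq_elim (hf x y)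
    rcases h4.1 with h | h
    · exfalso; rcases h4.2.2.2 with h2 | h2 <;> linarith
    · exact h
  have hmemH : ∀ u : X, u ∈ Hset x y ↔ ‖u - x‖ = ‖x - y‖ / 2 ∧ ‖u - y‖ = ‖x - y‖ / 2 := by
    intro u; simp [Hset]
  have hmemH' : ∀ u : Y, u ∈ Hset (f x) (-f y) ↔
      ‖u - f x‖ = ‖x - y‖ / 2 ∧ ‖u + f y‖ = ‖x - y‖ / 2 := by
    intro u; simp only [Hset, Set.mem_setOf_eq, sub_neg_eq_add, hd]
  -- sign-corrected forward map
  have hFmapEx : ∀ p : X, ∃ h : Y, p ∈ Hset x y →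
      h ∈ Hset (f x) (-f y) ∧ (h = f p ∨ h = -f p) := by
    intro p
    by_cases hp : p ∈ Hset x y
    · obtain ⟨hpx, hpy⟩ := (hmemH p).mp hp
      have ex := (pair_eq_elim (hf p x)).2.2.2
      rw [hpx] at ex
      have ey := (pair_eq_elim (hf p y)).2.2.2
      rw [hpy] at ey
      rcases ex with ex | ex <;> rcases ey with ey | ey
      · exfalso
        have h5 : f x - f y = (f p + f x) - (f p + f y) := by abel
        have h6 : ‖f x - f y‖ ≤ ‖f p + f x‖ + ‖f p + f y‖ := by
          rw [h5]; exact norm_sub_le _ _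
        rw [← ex, ← ey] at h6
        linarith
      · refine ⟨-f p, fun _ => ⟨(hmemH' _).mpr ⟨?_, ?_⟩, Or.inr rfl⟩⟩
        · rw [show -f p - f x = -(f p + f x) by abel, norm_neg, ← ex]
        · rw [show -f p + f y = -(f p - f y) by abel, norm_neg, ← ey]
      · exact ⟨f p, fun _ => ⟨(hmemH' _).mpr ⟨ex.symm, ey.symm⟩, Or.inl rfl⟩⟩
      · exfalso
        have h5 : f x - f y = (f p - f y) - (f p - f x) := by abel
        have h6 : ‖f x - f y‖ ≤ ‖f p - f y‖ + ‖f p - f x‖ := by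
          rw [h5]; exact norm_sub_le _ _
        rw [← ex, ← ey] at h6
        linarith
    · exact ⟨0, fun h => absurd h hp⟩
  choose Fmap hFmap using hFmapEx
  -- sign-corrected inverse map
  have hFinvEx : ∀ h : Y, ∃ q : X, h ∈ Hset (f x) (-f y) →
      q ∈ Hset x y ∧ (f q = h ∨ f q = -h) := by
    intro h
    by_cases hh : h ∈ Hset (f x) (-f y)
    · obtain ⟨h1, h2⟩ := (hmemH' h).mp hh
      obtain ⟨p, rfl⟩ := hsurj h
      have e1 := (pair_eq_elim (hf p x)).2.1
      rw [h1] at e1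
      have e2 := (pair_eq_elim (hf p y)).1
      rw [h2] at e2
      rcases e1 with e1 | e1 <;> rcases e2 with e2 | e2
      · refine ⟨-p, fun _ => ⟨(hmemH _).mpr ⟨?_, ?_⟩, ?_⟩⟩
        · rw [show -p - x = -(p + x) by abel, norm_neg, e1]
        · rw [show -p - y = -(p + y) by abel, norm_neg, e2]
        · have e3 := (pair_eq_elim (hf p (-p))).2.2.1
          have hz : ‖p + -p‖ = 0 := by simp
          rw [hz] at e3
          rcases e3 with e3 | e3
          · have h5 : f p + f (-p) = 0 := norm_eq_zero.mp e3.symm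
            exact Or.inr (eq_neg_of_add_eq_zero_right h5)
          · have h5 : f p - f (-p) = 0 := norm_eq_zero.mp e3.symm
            exact Or.inl (sub_eq_zero.mp h5).symm
      · exfalso
        have h5 : x + y = (p + x) - (p - y) := by abel
        have h6 : ‖x + y‖ ≤ ‖p + x‖ + ‖p - y‖ := by rw [h5]; exact norm_sub_le _ _
        rw [← e1, ← e2] at h6
        linarith
      · exfalso
        have h5 : x + y = (p + y) - (p - x) := by abel
        have h6 : ‖x + y‖ ≤ ‖p + y‖ + ‖p - x‖ := by rw [h5]; exact norm_sub_le _ _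
        rw [← e1, ← e2] at h6
        linarith
      · exact ⟨p, fun _ => ⟨(hmemH _).mpr ⟨e1.symm, e2.symm⟩, Or.inl rfl⟩⟩
    · exact ⟨0, fun h' => absurd h' hh⟩
  choose Finv hFinv using hFinvEx
  -- key norm-transfer lemma
  have key : ∀ p, p ∈ Hset x y → ∀ q, q ∈ Hset x y → ∀ h k : Y,
      h ∈ Hset (f x) (-f y) → k ∈ Hset (f x) (-f y) →
      (h = f p ∨ h = -f p) → (k = f q ∨ k = -f q) →
      ‖h + k‖ = ‖p + q‖ ∧ ‖h - k‖ = ‖p - q‖ := by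
    intro p hp q hq h k hh hk hhp hkq
    have hset : ({‖h + k‖, ‖h - k‖} : Set ℝ) = {‖p + q‖, ‖p - q‖} := by
      rw [← hf p q]
      rcases hhp with rfl | rfl <;> rcases hkq with rfl | rfl
      · rfl
      · rw [← sub_eq_add_neg, sub_neg_eq_add, Set.pair_comm]
      · rw [show -f p + f q = -(f p - f q) by abel, show -f p - f q = -(f p + f q) by abel,
          norm_neg, norm_neg, Set.pair_comm]
      · rw [show -f p + -f q = -(f p + f q) by abel, show -f p - -f q = -(f p - f q) by abel,
          norm_neg, norm_neg]
    exact pair_max_min hset (hY h hh k hk) (hX p hp q hq)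
  set m := ((1 : ℝ) / 2) • (x + y) with hm
  set w := ((1 : ℝ) / 2) • (f x - f y) with hw
  have hmH : m ∈ Hset x y := by
    refine (hmemH m).mpr ⟨?_, ?_⟩
    · have h1 : m - x = ((1 : ℝ) / 2) • (y - x) := by rw [hm]; module
      rw [h1, norm_smul, Real.norm_eq_abs, abs_of_pos (by norm_num : (0:ℝ) < 1/2),
        norm_sub_rev y x]
      ring
    · have h1 : m - y = ((1 : ℝ) / 2) • (x - y) := by rw [hm]; module
      rw [h1, norm_smul, Real.norm_eq_abs, abs_of_pos (by norm_num : (0:ℝ) < 1/2)]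
      ring
  have hwH' : w ∈ Hset (f x) (-f y) := by
    refine (hmemH' w).mpr ⟨?_, ?_⟩
    · have h1 : w - f x = ((1 : ℝ) / 2) • (-(f x + f y)) := by rw [hw]; module
      rw [h1, norm_smul, Real.norm_eq_abs, abs_of_pos (by norm_num : (0:ℝ) < 1/2),
        norm_neg, hd]
      ring
    · have h1 : w + f y = ((1 : ℝ) / 2) • (f x + f y) := by rw [hw]; module
      rw [h1, norm_smul, Real.norm_eq_abs, abs_of_pos (by norm_num : (0:ℝ) < 1/2), hd]
      ring
  have hreflH : ∀ p, p ∈ Hset x y → (x + y) - p ∈ Hset x y := by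
    intro p hp
    obtain ⟨h1, h2⟩ := (hmemH p).mp hp
    refine (hmemH _).mpr ⟨?_, ?_⟩
    · rw [show x + y - p - x = -(p - y) by abel, norm_neg, h2]
    · rw [show x + y - p - y = -(p - x) by abel, norm_neg, h1]
  have hreflH' : ∀ h, h ∈ Hset (f x) (-f y) → (f x - f y) - h ∈ Hset (f x) (-f y) := by
    intro h hh
    obtain ⟨h1, h2⟩ := (hmemH' h).mp hh
    refine (hmemH' _).mpr ⟨?_, ?_⟩
    · rw [show f x - f y - h - f x = -(h + f y) by abel, norm_neg, h2]
    · rw [show f x - f y - h + f y = -(h - f x) by abel, norm_neg, h1]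
  have hbound : ∀ h, h ∈ Hset (f x) (-f y) → ‖h - w‖ ≤ ‖x - y‖ := by
    intro h hh
    obtain ⟨h1, _⟩ := (hmemH' h).mp hh
    have hwx : ‖f x - w‖ = ‖x - y‖ / 2 := by
      rw [show f x - w = -(w - f x) by abel, norm_neg]
      exact ((hmemH' w).mp hwH').1
    calc ‖h - w‖ = ‖(h - f x) + (f x - w)‖ := by rw [show (h - f x) + (f x - w) = h - w by abel]
      _ ≤ ‖h - f x‖ + ‖f x - w‖ := norm_add_le _ _
      _ = ‖x - y‖ := by rw [h1, hwx]; ring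
  set G := Fmap m with hGdef
  have hGspec := hFmap m hmH
  set ρ : Y → Y := fun h => Fmap ((x + y) - Finv h) with hρ
  have hρmem : ∀ h, h ∈ Hset (f x) (-f y) → ρ h ∈ Hset (f x) (-f y) := by
    intro h hh
    exact (hFmap _ (hreflH _ (hFinv h hh).1)).1
  have hρsig : ∀ h, h ∈ Hset (f x) (-f y) →
      (ρ h = f ((x + y) - Finv h) ∨ ρ h = -f ((x + y) - Finv h)) := by
    intro h hh
    exact (hFmap _ (hreflH _ (hFinv h hh).1)).2
  have hsig : ∀ h, h ∈ Hset (f x) (-f y) → (h = f (Finv h) ∨ h = -f (Finv h)) := by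
    intro h hh
    rcases (hFinv h hh).2 with e | e
    · exact Or.inl e.symm
    · right; rw [e, neg_neg]
  have hiso : ∀ h, h ∈ Hset (f x) (-f y) → ∀ k, k ∈ Hset (f x) (-f y) →
      ‖ρ h - ρ k‖ = ‖h - k‖ := by
    intro h hh k hk
    have k1 := key _ (hreflH _ (hFinv h hh).1) _ (hreflH _ (hFinv k hk).1) (ρ h) (ρ k)
      (hρmem h hh) (hρmem k hk) (hρsig h hh) (hρsig k hk)
    have k2 := key _ (hFinv h hh).1 _ (hFinv k hk).1 h k hh hk (hsig h hh) (hsig k hk)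
    rw [k1.2, show (x + y - Finv h) - (x + y - Finv k) = -(Finv h - Finv k) by abel, norm_neg,
      ← k2.2]
  have hdisp : ∀ h, h ∈ Hset (f x) (-f y) → ‖ρ h - h‖ = 2 * ‖h - G‖ := by
    intro h hh
    have k1 := key _ (hreflH _ (hFinv h hh).1) _ (hFinv h hh).1 (ρ h) h
      (hρmem h hh) hh (hρsig h hh) (hsig h hh)
    have k2 := key m hmH _ (hFinv h hh).1 G h hGspec.1 hh hGspec.2 (hsig h hh)
    rw [k1.2, show (x + y - Finv h) - Finv h = (2 : ℝ) • (m - Finv h) by rw [hm]; module,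
      norm_smul, show h - G = -(G - h) by abel, norm_neg, k2.2]
    norm_num
  have hfix : ρ G = G := by
    have k2 := key m hmH _ (hFinv G hGspec.1).1 G G hGspec.1 hGspec.1 hGspec.2 (hsig G hGspec.1)
    have h0 : ‖m - Finv G‖ = 0 := by rw [← k2.2, sub_self, norm_zero]
    have hq : Finv G = m := (sub_eq_zero.mp (norm_eq_zero.mp h0)).symm
    show Fmap ((x + y) - Finv G) = G
    rw [hq, show (x + y) - m = m by rw [hm]; module]
  -- the doubling sequence
  let e : ℕ → Y := fun n => Nat.rec G (fun _ prev => (f x - f y) - ρ prev) n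
  have he0 : e 0 = G := rfl
  have hesucc : ∀ n, e (n + 1) = (f x - f y) - ρ (e n) := fun n => rfl
  have heH' : ∀ n, e n ∈ Hset (f x) (-f y) := by
    intro n
    induction n with
    | zero => rw [he0]; exact hGspec.1
    | succ n ih => rw [hesucc]; exact hreflH' _ (hρmem _ ih)
  set W := (f x - f y) - G with hW
  set δ := ‖w - G‖ with hδdef
  have hWG : ‖W - G‖ = 2 * δ := by
    rw [hW, show f x - f y - G - G = (2 : ℝ) • (w - G) by rw [hw]; module, norm_smul, hδdef]
    norm_num
  have hb : ∀ n, ‖e (n + 1) - W‖ = ‖e n - G‖ := by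
    intro n
    rw [hesucc, hW, show (f x - f y - ρ (e n)) - (f x - f y - G) = -(ρ (e n) - G) by abel,
      norm_neg]
    calc ‖ρ (e n) - G‖ = ‖ρ (e n) - ρ G‖ := by rw [hfix]
      _ = ‖e n - G‖ := hiso _ (heH' n) _ hGspec.1
  have ha : ∀ n, 2 * ‖e n - G‖ - ‖e n - W‖ ≤ ‖e (n + 1) - G‖ := by
    intro n
    have h1 : ‖e n - ρ (e n)‖ - ‖e n - W‖ ≤ ‖(e n - ρ (e n)) - (e n - W)‖ :=
      norm_sub_norm_le _ _
    have h2 : (e n - ρ (e n)) - (e n - W) = e (n + 1) - G := by rw [hesucc, hW]; abel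
    have h3 : ‖e n - ρ (e n)‖ = 2 * ‖e n - G‖ := by
      rw [show e n - ρ (e n) = -(ρ (e n) - e n) by abel, norm_neg, hdisp _ (heH' n)]
    rw [h2, h3] at h1
    linarith
  have he1 : ‖e 1 - G‖ = 2 * δ := by
    have h1 : e 1 = W := by
      have h2 := hesucc 0
      rw [he0, hfix, ← hW] at h2
      exact h2
    rw [h1, hWG]
  have hstep : ∀ n, 2 * δ ≤ ‖e (n + 1) - G‖ - ‖e n - G‖ := by
    intro n
    induction n with
    | zero =>
      rw [show (0 : ℕ) + 1 = 1 from rfl, he1, he0, sub_self, norm_zero]; linarith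
    | succ n ih =>
      have h1 := ha (n + 1)
      have h2 := hb n
      linarith
  have hgrow : ∀ n : ℕ, 2 * δ * n ≤ ‖e n - G‖ := by
    intro n
    induction n with
    | zero => simp [he0]
    | succ n ih =>
      have h1 := hstep n
      push_cast
      push_cast at ih
      nlinarith
  have hδ0 : δ = 0 := by
    by_contra hne
    have hδpos : 0 < δ := lt_of_le_of_ne (norm_nonneg _) (Ne.symm hne)
    obtain ⟨n, hn⟩ := exists_nat_gt ((‖x - y‖ + δ) / (2 * δ))
    have h1 := hgrow n
    have h2 : ‖e n - G‖ ≤ ‖x - y‖ + δ := by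
      have h3 : e n - G = (e n - w) + (w - G) := by abel
      calc ‖e n - G‖ = ‖(e n - w) + (w - G)‖ := by rw [h3]
        _ ≤ ‖e n - w‖ + ‖w - G‖ := norm_add_le _ _
        _ ≤ ‖x - y‖ + δ := by
            rw [← hδdef]
            exact add_le_add_left (hbound _ (heH' n)) δ
    have h4 : (‖x - y‖ + δ) < 2 * δ * n := by
      rw [div_lt_iff₀ (by positivity)] at hn
      linarith
    linarith
  have hwG : w = G := sub_eq_zero.mp (norm_eq_zero.mp hδ0)
  rcases hGspec.2 with hfm | hfm
  · left; rw [hwG]; exact hfm.symm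
  · right; rw [hwG, hGdef, hfm, neg_neg]
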